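/- Let f : ℝⁿ × ℝᵐ → ℝⁿ and φ : ℝⁿ × ℝᵐ → ℝᵏ be continuously differentiable, and let (q,u,p,λ) : [t₀,t₁] → ℝⁿ × ℝᵐ × ℝⁿ × ℝᵏ be continuously differentiable curves. Define the action S(q,u,p,λ) = ∫_{t₀}^{t₁} ( ⟨p(t), q̇(t) − f(q(t),u(t))⟩ − ⟨λ(t), φ(q(t),u(t))⟩ ) dt. Then the Gateaux derivative d/dε|_{ε=0} S(q+ε·δq, u+ε·δu, p+ε·δp, λ+ε·δλ) vanishes for all continuously differentiable variations (δq, δu, δp, δλ) with δq(t₀) = 0 and δq(t₁) = 0 if and only if for all t ∈ [t₀,t₁]: q̇ = f(q,u), ṗ = −D_qf(q,u)ᵀ p − D_qφ(q,u)ᵀ λ, 0 = φ(q,u), and 0 = D_uf(q,u)ᵀ p + D_uφ(q,u)ᵀ λ. -/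

import Mathlib

open scoped RealInnerProductSpace

noncomputable section

abbrev Euc (n : ℕ) : Type := EuclideanSpace ℝ (Fin n)

/-- Partial Jacobian `D_qF(q,u)` with respect to the first argument. -/
noncomputable def Dq {n m k : ℕ} (F : Euc n × Euc m → Euc k) (q : Euc n) (u : Euc m) :
    Euc n →L[ℝ] Euc k :=
  fderiv ℝ (fun q' => F (q', u)) q

/-- Partial Jacobian `D_uF(q,u)` with respect to the second argument. -/
noncomputable def Du {n m k : ℕ} (F : Euc n × Euc m → Euc k) (q : Euc n) (u : Euc m) :
    Euc m →L[ℝ] Euc k :=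
  fderiv ℝ (fun u' => F (q, u')) u

/-- `D_qF(q,u)ᵀ`, the transpose (adjoint) of the partial Jacobian in `q`. -/
noncomputable def DqT {n m k : ℕ} (F : Euc n × Euc m → Euc k) (q : Euc n) (u : Euc m) :
    Euc k →L[ℝ] Euc n :=
  ContinuousLinearMap.adjoint (Dq F q u)

/-- `D_uF(q,u)ᵀ`, the transpose (adjoint) of the partial Jacobian in `u`. -/
noncomputable def DuT {n m k : ℕ} (F : Euc n × Euc m → Euc k) (q : Euc n) (u : Euc m) :
    Euc k →L[ℝ] Euc m :=
  ContinuousLinearMap.adjoint (Du F q u)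

/-- Partial gradient `∇_qL(q,u)`. -/
noncomputable def gradQ {n m : ℕ} (L : Euc n × Euc m → ℝ) (q : Euc n) (u : Euc m) : Euc n :=
  gradient (fun q' => L (q', u)) q

/-- Partial gradient `∇_uL(q,u)`. -/
noncomputable def gradU {n m : ℕ} (L : Euc n × Euc m → ℝ) (q : Euc n) (u : Euc m) : Euc m :=
  gradient (fun u' => L (q, u')) u

open Set Metric MeasureTheory intervalIntegral

section AuxLemmas

variable {n m k : ℕ}

lemma Dq_eq (F : Euc n × Euc m → Euc k) (hF : ContDiff ℝ 1 F) (a : Euc n) (b : Euc m) :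
    Dq F a b = (fderiv ℝ F (a, b)).comp (ContinuousLinearMap.inl ℝ (Euc n) (Euc m)) := by
  have h := ((hF.differentiable one_ne_zero) (a, b)).hasFDerivAt
  exact (h.comp a (hasFDerivAt_prodMk_left a b)).fderiv

lemma Du_eq (F : Euc n × Euc m → Euc k) (hF : ContDiff ℝ 1 F) (a : Euc n) (b : Euc m) :
    Du F a b = (fderiv ℝ F (a, b)).comp (ContinuousLinearMap.inr ℝ (Euc n) (Euc m)) := by
  have h := ((hF.differentiable one_ne_zero) (a, b)).hasFDerivAt
  exact (h.comp b (hasFDerivAt_prodMk_right a b)).fderiv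

lemma fderiv_split (F : Euc n × Euc m → Euc k) (hF : ContDiff ℝ 1 F) (a : Euc n) (b : Euc m)
    (v : Euc n) (w : Euc m) :
    fderiv ℝ F (a, b) (v, w) = Dq F a b v + Du F a b w := by
  rw [Dq_eq F hF, Du_eq F hF]
  simp only [ContinuousLinearMap.comp_apply, ContinuousLinearMap.inl_apply,
    ContinuousLinearMap.inr_apply]
  rw [← map_add]
  simp

lemma cont_DqT {X : Type*} [TopologicalSpace X] (F : Euc n × Euc m → Euc k)
    (hF : ContDiff ℝ 1 F) (a : X → Euc n) (b : X → Euc m)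
    (ha : Continuous a) (hb : Continuous b) :
    Continuous fun x => DqT F (a x) (b x) := by
  have h : (fun x => DqT F (a x) (b x))
      = fun x => ContinuousLinearMap.adjoint
        ((fderiv ℝ F (a x, b x)).comp (ContinuousLinearMap.inl ℝ (Euc n) (Euc m))) := by
    funext x; rw [DqT, Dq_eq F hF]
  rw [h]
  exact (ContinuousLinearMap.adjoint.isometry.continuous).comp
    (((hF.continuous_fderiv one_ne_zero).comp (ha.prodMk hb)).clm_comp continuous_const)

lemma cont_DuT {X : Type*} [TopologicalSpace X] (F : Euc n × Euc m → Euc k)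
    (hF : ContDiff ℝ 1 F) (a : X → Euc n) (b : X → Euc m)
    (ha : Continuous a) (hb : Continuous b) :
    Continuous fun x => DuT F (a x) (b x) := by
  have h : (fun x => DuT F (a x) (b x))
      = fun x => ContinuousLinearMap.adjoint
        ((fderiv ℝ F (a x, b x)).comp (ContinuousLinearMap.inr ℝ (Euc n) (Euc m))) := by
    funext x; rw [DuT, Du_eq F hF]
  rw [h]
  exact (ContinuousLinearMap.adjoint.isometry.continuous).comp
    (((hF.continuous_fderiv one_ne_zero).comp (ha.prodMk hb)).clm_comp continuous_const)

lemma fundamental {N : ℕ} (g : ℝ → Euc N) (hg : Continuous g) {t₀ t₁ : ℝ} (ht : t₀ < t₁)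
    (h : ∀ δ : ℝ → Euc N, ContDiff ℝ 1 δ → δ t₀ = 0 → δ t₁ = 0 →
      (∫ t in t₀..t₁, ⟪δ t, g t⟫) = 0) :
    ∀ t ∈ Set.Icc t₀ t₁, g t = 0 := by
  have hIoo : Set.EqOn g 0 (Set.Ioo t₀ t₁) := by
    intro s hs
    by_contra hgs
    have hgs' : g s ≠ 0 := by simpa using hgs
    have hpos : (0:ℝ) < ⟪g s, g s⟫ := by
      rw [real_inner_self_eq_norm_sq]
      exact pow_pos (norm_pos_iff.2 hgs') 2
    have hcont : Continuous fun t => ⟪g s, g t⟫ := continuous_const.inner hg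
    have hV : IsOpen ({t | (0:ℝ) < ⟪g s, g t⟫} ∩ Set.Ioo t₀ t₁) :=
      (isOpen_lt continuous_const hcont).inter isOpen_Ioo
    have hsV : s ∈ {t | (0:ℝ) < ⟪g s, g t⟫} ∩ Set.Ioo t₀ t₁ := ⟨hpos, hs⟩
    obtain ⟨r, hr, hball⟩ := Metric.isOpen_iff.1 hV s hsV
    set bump : ContDiffBump s := ⟨r/2, r, by positivity, by linarith⟩ with hbump
    set δ : ℝ → Euc N := fun t => bump t • g s with hδdef
    have hδ : ContDiff ℝ 1 δ := bump.contDiff.smul contDiff_const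
    have hnotin : ∀ x : ℝ, x ∉ Set.Ioo t₀ t₁ → bump x = 0 := by
      intro x hx
      apply bump.zero_of_le_dist
      show bump.rOut ≤ dist x s
      by_contra hlt
      exact hx (hball (mem_ball.2 (lt_of_not_ge hlt))).2
    have hδ0 : δ t₀ = 0 := by
      rw [hδdef]; simp [hnotin t₀ (by simp [ht])]
    have hδ1 : δ t₁ = 0 := by
      rw [hδdef]; simp [hnotin t₁ (by simp [ht.le])]
    have hint := h δ hδ hδ0 hδ1
    -- rewrite integrand
    have heq : ∀ t, ⟪δ t, g t⟫ = bump t * ⟪g s, g t⟫ := by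
      intro t; exact real_inner_smul_left _ _ _
    simp only [heq] at hint
    -- positivity
    set ψ : ℝ → ℝ := fun t => bump t * ⟪g s, g t⟫ with hψ
    have hψc : Continuous ψ := bump.continuous.mul hcont
    have hψnn : ∀ t, 0 ≤ ψ t := by
      intro t
      by_cases hmem : t ∈ Metric.ball s r
      · exact mul_nonneg bump.nonneg (le_of_lt (hball hmem).1)
      · have : bump t = 0 := bump.zero_of_le_dist (not_lt.1 (fun hc => hmem (mem_ball.2 hc)))
        simp [hψ, this]
    have ha' : s - r/2 ∈ Set.Ioo t₀ t₁ := by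
      refine (hball (mem_ball.2 ?_)).2
      rw [Real.dist_eq, abs_lt]; constructor <;> linarith
    have hb' : s + r/2 ∈ Set.Ioo t₀ t₁ := by
      refine (hball (mem_ball.2 ?_)).2
      rw [Real.dist_eq, abs_lt]; constructor <;> linarith
    have hab : s - r/2 < s + r/2 := by linarith
    have hi1 : IntervalIntegrable ψ volume t₀ (s - r/2) := hψc.intervalIntegrable _ _
    have hi2 : IntervalIntegrable ψ volume (s - r/2) (s + r/2) := hψc.intervalIntegrable _ _
    have hi3 : IntervalIntegrable ψ volume (s + r/2) t₁ := hψc.intervalIntegrable _ _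
    have hmid : 0 < ∫ t in (s - r/2)..(s + r/2), ψ t := by
      apply intervalIntegral.intervalIntegral_pos_of_pos_on hi2 _ hab
      intro x hx
      have hxball : x ∈ Metric.ball s r := by
        rw [mem_ball, Real.dist_eq]
        rw [abs_lt]; constructor <;> [linarith [hx.1]; linarith [hx.2]]
      have h1 : 0 < bump x := bump.pos_of_mem_ball hxball
      exact mul_pos h1 (hball hxball).1
    have h1nn : 0 ≤ ∫ t in t₀..(s - r/2), ψ t :=
      intervalIntegral.integral_nonneg ha'.1.le (fun x _ => hψnn x)
    have h3nn : 0 ≤ ∫ t in (s + r/2)..t₁, ψ t :=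
      intervalIntegral.integral_nonneg hb'.2.le (fun x _ => hψnn x)
    have hsplit : (∫ t in t₀..t₁, ψ t)
        = (∫ t in t₀..(s - r/2), ψ t) + (∫ t in (s - r/2)..(s + r/2), ψ t)
          + (∫ t in (s + r/2)..t₁, ψ t) := by
      rw [intervalIntegral.integral_add_adjacent_intervals hi1 hi2,
        intervalIntegral.integral_add_adjacent_intervals (hi1.trans hi2) hi3]
    rw [hint] at hsplit
    linarith
  intro t htI
  have : Set.EqOn g 0 (closure (Set.Ioo t₀ t₁)) :=
    hIoo.closure hg continuous_const
  have := this (by rw [closure_Ioo ht.ne]; exact htI)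
  simpa using this



lemma key_deriv
    (f : Euc n × Euc m → Euc n) (φ : Euc n × Euc m → Euc k)
    (hf : ContDiff ℝ 1 f) (hφ : ContDiff ℝ 1 φ)
    (t₀ t₁ : ℝ)
    (q : ℝ → Euc n) (u : ℝ → Euc m) (p : ℝ → Euc n) (lam : ℝ → Euc k)
    (hq : ContDiff ℝ 1 q) (hu : ContDiff ℝ 1 u) (hp : ContDiff ℝ 1 p) (hlam : ContDiff ℝ 1 lam)
    (δq : ℝ → Euc n) (δu : ℝ → Euc m) (δp : ℝ → Euc n) (δlam : ℝ → Euc k)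
    (hδq : ContDiff ℝ 1 δq) (hδu : ContDiff ℝ 1 δu) (hδp : ContDiff ℝ 1 δp)
    (hδlam : ContDiff ℝ 1 δlam)
    (hb0 : δq t₀ = 0) (hb1 : δq t₁ = 0) :
    deriv (fun ε : ℝ =>
      ∫ t in t₀..t₁,
        (⟪p t + ε • δp t,
            deriv (fun s => q s + ε • δq s) t - f (q t + ε • δq t, u t + ε • δu t)⟫
          - ⟪lam t + ε • δlam t, φ (q t + ε • δq t, u t + ε • δu t)⟫)) 0
    = ∫ t in t₀..t₁,
        (⟪δp t, deriv q t - f (q t, u t)⟫ - ⟪δlam t, φ (q t, u t)⟫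
          + ⟪δq t, -deriv p t - DqT f (q t) (u t) (p t) - DqT φ (q t) (u t) (lam t)⟫
          + ⟪δu t, -(DuT f (q t) (u t) (p t)) - DuT φ (q t) (u t) (lam t)⟫) := by
  -- continuity of basic data
  have cq := hq.continuous; have cu := hu.continuous; have cp := hp.continuous
  have clam := hlam.continuous
  have cδq := hδq.continuous; have cδu := hδu.continuous; have cδp := hδp.continuous
  have cδlam := hδlam.continuous
  have cdq := hq.continuous_deriv le_rfl
  have cdp := hp.continuous_deriv le_rfl
  have cdδq := hδq.continuous_deriv le_rfl
  set F : ℝ → ℝ → ℝ := fun ε t =>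
    ⟪p t + ε • δp t, (deriv q t + ε • deriv δq t) - f (q t + ε • δq t, u t + ε • δu t)⟫
      - ⟪lam t + ε • δlam t, φ (q t + ε • δq t, u t + ε • δu t)⟫ with hFdef
  set F' : ℝ → ℝ → ℝ := fun ε t =>
    (⟪p t + ε • δp t,
        deriv δq t - (fderiv ℝ f (q t + ε • δq t, u t + ε • δu t)) (δq t, δu t)⟫
      + ⟪δp t, (deriv q t + ε • deriv δq t) - f (q t + ε • δq t, u t + ε • δu t)⟫)
      - (⟪lam t + ε • δlam t, (fderiv ℝ φ (q t + ε • δq t, u t + ε • δu t)) (δq t, δu t)⟫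
      + ⟪δlam t, φ (q t + ε • δq t, u t + ε • δu t)⟫) with hF'def
  -- replace deriv (fun s => q s + ε • δq s) by explicit formula
  have hqd : ∀ (ε t : ℝ), deriv (fun s => q s + ε • δq s) t = deriv q t + ε • deriv δq t := by
    intro ε t
    exact (((hq.differentiable one_ne_zero t).hasDerivAt).add
      (((hδq.differentiable one_ne_zero t).hasDerivAt).const_smul ε)).deriv
  have hfun : (fun ε : ℝ =>
      ∫ t in t₀..t₁,
        (⟪p t + ε • δp t,
            deriv (fun s => q s + ε • δq s) t - f (q t + ε • δq t, u t + ε • δu t)⟫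
          - ⟪lam t + ε • δlam t, φ (q t + ε • δq t, u t + ε • δu t)⟫))
      = fun ε => ∫ t in t₀..t₁, F ε t := by
    funext ε
    refine intervalIntegral.integral_congr fun t _ => ?_
    rw [hFdef, hqd ε t]
  rw [hfun]
  -- joint continuity
  have cQ : Continuous fun z : ℝ × ℝ => q z.2 + z.1 • δq z.2 :=
    (cq.comp continuous_snd).add (continuous_fst.smul (cδq.comp continuous_snd))
  have cU : Continuous fun z : ℝ × ℝ => u z.2 + z.1 • δu z.2 :=
    (cu.comp continuous_snd).add (continuous_fst.smul (cδu.comp continuous_snd))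
  have cP : Continuous fun z : ℝ × ℝ => p z.2 + z.1 • δp z.2 :=
    (cp.comp continuous_snd).add (continuous_fst.smul (cδp.comp continuous_snd))
  have cΛ : Continuous fun z : ℝ × ℝ => lam z.2 + z.1 • δlam z.2 :=
    (clam.comp continuous_snd).add (continuous_fst.smul (cδlam.comp continuous_snd))
  have cdQ : Continuous fun z : ℝ × ℝ => deriv q z.2 + z.1 • deriv δq z.2 :=
    (cdq.comp continuous_snd).add (continuous_fst.smul (cdδq.comp continuous_snd))
  have cQU : Continuous fun z : ℝ × ℝ => (q z.2 + z.1 • δq z.2, u z.2 + z.1 • δu z.2) :=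
    cQ.prodMk cU
  have cδqu : Continuous fun z : ℝ × ℝ => (δq z.2, δu z.2) :=
    (cδq.comp continuous_snd).prodMk (cδu.comp continuous_snd)
  have cF : Continuous fun z : ℝ × ℝ => F z.1 z.2 :=
    (cP.inner (cdQ.sub (hf.continuous.comp cQU))).sub (cΛ.inner (hφ.continuous.comp cQU))
  have cF' : Continuous fun z : ℝ × ℝ => F' z.1 z.2 := by
    refine Continuous.sub (Continuous.add ?_ ?_) (Continuous.add ?_ ?_)
    · exact cP.inner (((cdδq.comp continuous_snd)).sub
        (((hf.continuous_fderiv one_ne_zero).comp cQU).clm_apply cδqu))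
    · exact (cδp.comp continuous_snd).inner (cdQ.sub (hf.continuous.comp cQU))
    · exact cΛ.inner (((hφ.continuous_fderiv one_ne_zero).comp cQU).clm_apply cδqu)
    · exact (cδlam.comp continuous_snd).inner (hφ.continuous.comp cQU)
  -- bound
  obtain ⟨C, hC⟩ := ((isCompact_closedBall (0:ℝ) 1).prod
    (isCompact_uIcc (a := t₀) (b := t₁))).exists_bound_of_continuousOn cF'.continuousOn
  -- dominated differentiation
  have key := intervalIntegral.hasDerivAt_integral_of_dominated_loc_of_deriv_le
    (μ := volume) (F := F) (F' := F') (x₀ := (0:ℝ)) (a := t₀) (b := t₁)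
    (bound := fun _ => C) (s := ball 0 1) (ball_mem_nhds 0 one_pos)
    (Filter.Eventually.of_forall fun x =>
      ((cF.comp (Continuous.prodMk_right x)).aestronglyMeasurable))
    ((cF.comp (Continuous.prodMk_right 0)).intervalIntegrable _ _)
    ((cF'.comp (Continuous.prodMk_right 0)).aestronglyMeasurable)
    (Filter.Eventually.of_forall fun t ht x hx =>
      hC (x, t) ⟨ball_subset_closedBall hx, Set.uIoc_subset_uIcc ht⟩)
    intervalIntegrable_const
    (Filter.Eventually.of_forall fun t ht x hx => by
      have hP : HasDerivAt (fun ε : ℝ => p t + ε • δp t) (δp t) x := by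
        simpa using ((hasDerivAt_id x).smul_const (δp t)).const_add (p t)
      have hQ : HasDerivAt (fun ε : ℝ => q t + ε • δq t) (δq t) x := by
        simpa using ((hasDerivAt_id x).smul_const (δq t)).const_add (q t)
      have hU : HasDerivAt (fun ε : ℝ => u t + ε • δu t) (δu t) x := by
        simpa using ((hasDerivAt_id x).smul_const (δu t)).const_add (u t)
      have hΛ : HasDerivAt (fun ε : ℝ => lam t + ε • δlam t) (δlam t) x := by
        simpa using ((hasDerivAt_id x).smul_const (δlam t)).const_add (lam t)
      have hdQ : HasDerivAt (fun ε : ℝ => deriv q t + ε • deriv δq t) (deriv δq t) x := by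
        simpa using ((hasDerivAt_id x).smul_const (deriv δq t)).const_add (deriv q t)
      have hQU : HasDerivAt (fun ε : ℝ => (q t + ε • δq t, u t + ε • δu t))
          ((δq t, δu t) : Euc n × Euc m) x := hQ.prodMk hU
      have hfQU : HasDerivAt (fun ε : ℝ => f (q t + ε • δq t, u t + ε • δu t))
          ((fderiv ℝ f (q t + x • δq t, u t + x • δu t)) (δq t, δu t)) x :=
        ((hf.differentiable one_ne_zero _).hasFDerivAt).comp_hasDerivAt x hQU
      have hφQU : HasDerivAt (fun ε : ℝ => φ (q t + ε • δq t, u t + ε • δu t))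
          ((fderiv ℝ φ (q t + x • δq t, u t + x • δu t)) (δq t, δu t)) x :=
        ((hφ.differentiable one_ne_zero _).hasFDerivAt).comp_hasDerivAt x hQU
      exact (HasDerivAt.inner ℝ hP (hdQ.sub hfQU)).sub (HasDerivAt.inner ℝ hΛ hφQU))
  rw [key.2.deriv]
  -- integration by parts
  have hIBP : (∫ t in t₀..t₁, (⟪p t, deriv δq t⟫ + ⟪deriv p t, δq t⟫)) = 0 := by
    have hder : ∀ t ∈ Set.uIcc t₀ t₁, HasDerivAt (fun s => ⟪p s, δq s⟫)
        (⟪p t, deriv δq t⟫ + ⟪deriv p t, δq t⟫) t := fun t _ =>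
      HasDerivAt.inner ℝ ((hp.differentiable one_ne_zero t).hasDerivAt)
        ((hδq.differentiable one_ne_zero t).hasDerivAt)
    rw [intervalIntegral.integral_eq_sub_of_hasDerivAt hder
      (((cp.inner cdδq).add (cdp.inner cδq)).intervalIntegrable _ _)]
    rw [hb0, hb1]
    simp
  -- pointwise identity
  have hsplit : ∀ t : ℝ, F' 0 t =
      (⟪δp t, deriv q t - f (q t, u t)⟫ - ⟪δlam t, φ (q t, u t)⟫
        + ⟪δq t, -deriv p t - DqT f (q t) (u t) (p t) - DqT φ (q t) (u t) (lam t)⟫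
        + ⟪δu t, -(DuT f (q t) (u t) (p t)) - DuT φ (q t) (u t) (lam t)⟫)
      + (⟪p t, deriv δq t⟫ + ⟪deriv p t, δq t⟫) := by
    intro t
    have A1 : ⟪δq t, DqT f (q t) (u t) (p t)⟫ = ⟪p t, Dq f (q t) (u t) (δq t)⟫ := by
      rw [real_inner_comm, DqT, ContinuousLinearMap.adjoint_inner_left]
    have A2 : ⟪δq t, DqT φ (q t) (u t) (lam t)⟫ = ⟪lam t, Dq φ (q t) (u t) (δq t)⟫ := by
      rw [real_inner_comm, DqT, ContinuousLinearMap.adjoint_inner_left]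
    have A3 : ⟪δu t, DuT f (q t) (u t) (p t)⟫ = ⟪p t, Du f (q t) (u t) (δu t)⟫ := by
      rw [real_inner_comm, DuT, ContinuousLinearMap.adjoint_inner_left]
    have A4 : ⟪δu t, DuT φ (q t) (u t) (lam t)⟫ = ⟪lam t, Du φ (q t) (u t) (δu t)⟫ := by
      rw [real_inner_comm, DuT, ContinuousLinearMap.adjoint_inner_left]
    rw [hF'def]
    simp only [zero_smul, add_zero]
    rw [fderiv_split f hf, fderiv_split φ hφ]
    simp only [inner_sub_right, inner_add_right, inner_neg_right, inner_sub_left]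
    rw [A1, A2, A3, A4, real_inner_comm (deriv p t) (δq t)]
    ring
  rw [intervalIntegral.integral_congr (g :=
    fun t => (⟪δp t, deriv q t - f (q t, u t)⟫ - ⟪δlam t, φ (q t, u t)⟫
        + ⟪δq t, -deriv p t - DqT f (q t) (u t) (p t) - DqT φ (q t) (u t) (lam t)⟫
        + ⟪δu t, -(DuT f (q t) (u t) (p t)) - DuT φ (q t) (u t) (lam t)⟫)
      + (⟪p t, deriv δq t⟫ + ⟪deriv p t, δq t⟫)) (fun t _ => hsplit t)]
  have cE : Continuous fun t =>
      (⟪δp t, deriv q t - f (q t, u t)⟫ - ⟪δlam t, φ (q t, u t)⟫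
        + ⟪δq t, -deriv p t - DqT f (q t) (u t) (p t) - DqT φ (q t) (u t) (lam t)⟫
        + ⟪δu t, -(DuT f (q t) (u t) (p t)) - DuT φ (q t) (u t) (lam t)⟫) := by
    refine Continuous.add (Continuous.add (Continuous.sub ?_ ?_) ?_) ?_
    · exact cδp.inner (cdq.sub (hf.continuous.comp (cq.prodMk cu)))
    · exact cδlam.inner (hφ.continuous.comp (cq.prodMk cu))
    · exact cδq.inner ((cdp.neg.sub ((cont_DqT f hf q u cq cu).clm_apply cp)).sub
        ((cont_DqT φ hφ q u cq cu).clm_apply clam))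
    · exact cδu.inner ((((cont_DuT f hf q u cq cu).clm_apply cp).neg).sub
        ((cont_DuT φ hφ q u cq cu).clm_apply clam))
  rw [intervalIntegral.integral_add (g := fun t => ⟪p t, deriv δq t⟫ + ⟪deriv p t, δq t⟫)
    (cE.intervalIntegrable _ _)
    (((cp.inner cdδq).add (cdp.inner cδq)).intervalIntegrable _ _), hIBP, add_zero]

end AuxLemmas


theorem adjoint_DAE_variational_principle {n m k : ℕ}
    (f : Euc n × Euc m → Euc n) (φ : Euc n × Euc m → Euc k)
    (hf : ContDiff ℝ 1 f) (hφ : ContDiff ℝ 1 φ)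
    (t₀ t₁ : ℝ) (ht : t₀ < t₁)
    (q : ℝ → Euc n) (u : ℝ → Euc m) (p : ℝ → Euc n) (lam : ℝ → Euc k)
    (hq : ContDiff ℝ 1 q) (hu : ContDiff ℝ 1 u) (hp : ContDiff ℝ 1 p)
    (hlam : ContDiff ℝ 1 lam) :
    (∀ (δq : ℝ → Euc n) (δu : ℝ → Euc m) (δp : ℝ → Euc n) (δlam : ℝ → Euc k),
        ContDiff ℝ 1 δq → ContDiff ℝ 1 δu → ContDiff ℝ 1 δp → ContDiff ℝ 1 δlam →
        δq t₀ = 0 → δq t₁ = 0 →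
        deriv (fun ε : ℝ =>
          ∫ t in t₀..t₁,
            (⟪p t + ε • δp t,
                deriv (fun s => q s + ε • δq s) t - f (q t + ε • δq t, u t + ε • δu t)⟫
              - ⟪lam t + ε • δlam t, φ (q t + ε • δq t, u t + ε • δu t)⟫)) 0 = 0)
    ↔ (∀ t ∈ Set.Icc t₀ t₁,
        deriv q t = f (q t, u t) ∧
        deriv p t = -(DqT f (q t) (u t) (p t)) - DqT φ (q t) (u t) (lam t) ∧
        φ (q t, u t) = 0 ∧
        DuT f (q t) (u t) (p t) + DuT φ (q t) (u t) (lam t) = 0) := by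
  have cq := hq.continuous; have cu := hu.continuous; have cp := hp.continuous
  have clam := hlam.continuous
  have cdq := hq.continuous_deriv le_rfl
  have cdp := hp.continuous_deriv le_rfl
  constructor
  · intro H
    have G1 : ∀ t ∈ Set.Icc t₀ t₁, deriv q t - f (q t, u t) = 0 := by
      apply fundamental _ (cdq.sub (hf.continuous.comp (cq.prodMk cu))) ht
      intro δ hδ _ _
      have h0 := H (fun _ => 0) (fun _ => 0) δ (fun _ => 0)
        contDiff_const contDiff_const hδ contDiff_const rfl rfl
      rw [key_deriv f φ hf hφ t₀ t₁ q u p lam hq hu hp hlam _ _ _ _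
        contDiff_const contDiff_const hδ contDiff_const rfl rfl] at h0
      rw [← h0]
      refine intervalIntegral.integral_congr fun t _ => ?_
      simp
    have G2 : ∀ t ∈ Set.Icc t₀ t₁, -φ (q t, u t) = 0 := by
      apply fundamental _ ((hφ.continuous.comp (cq.prodMk cu)).neg) ht
      intro δ hδ _ _
      have h0 := H (fun _ => 0) (fun _ => 0) (fun _ => 0) δ
        contDiff_const contDiff_const contDiff_const hδ rfl rfl
      rw [key_deriv f φ hf hφ t₀ t₁ q u p lam hq hu hp hlam _ _ _ _
        contDiff_const contDiff_const contDiff_const hδ rfl rfl] at h0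
      rw [← h0]
      refine intervalIntegral.integral_congr fun t _ => ?_
      simp [inner_neg_right]
    have G3 : ∀ t ∈ Set.Icc t₀ t₁,
        -deriv p t - DqT f (q t) (u t) (p t) - DqT φ (q t) (u t) (lam t) = 0 := by
      apply fundamental _ ((cdp.neg.sub ((cont_DqT f hf q u cq cu).clm_apply cp)).sub
        ((cont_DqT φ hφ q u cq cu).clm_apply clam)) ht
      intro δ hδ hδ0 hδ1
      have h0 := H δ (fun _ => 0) (fun _ => 0) (fun _ => 0)
        hδ contDiff_const contDiff_const contDiff_const hδ0 hδ1
      rw [key_deriv f φ hf hφ t₀ t₁ q u p lam hq hu hp hlam _ _ _ _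
        hδ contDiff_const contDiff_const contDiff_const hδ0 hδ1] at h0
      rw [← h0]
      refine intervalIntegral.integral_congr fun t _ => ?_
      simp
    have G4 : ∀ t ∈ Set.Icc t₀ t₁,
        -(DuT f (q t) (u t) (p t)) - DuT φ (q t) (u t) (lam t) = 0 := by
      apply fundamental _ ((((cont_DuT f hf q u cq cu).clm_apply cp).neg).sub
        ((cont_DuT φ hφ q u cq cu).clm_apply clam)) ht
      intro δ hδ _ _
      have h0 := H (fun _ => 0) δ (fun _ => 0) (fun _ => 0)
        contDiff_const hδ contDiff_const contDiff_const rfl rfl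
      rw [key_deriv f φ hf hφ t₀ t₁ q u p lam hq hu hp hlam _ _ _ _
        contDiff_const hδ contDiff_const contDiff_const rfl rfl] at h0
      rw [← h0]
      refine intervalIntegral.integral_congr fun t _ => ?_
      simp
    intro t htI
    refine ⟨sub_eq_zero.1 (G1 t htI), ?_, neg_eq_zero.1 (G2 t htI), ?_⟩
    · have h := G3 t htI
      apply eq_of_sub_eq_zero
      have hrw : deriv p t - (-(DqT f (q t) (u t) (p t)) - DqT φ (q t) (u t) (lam t))
          = -(-deriv p t - DqT f (q t) (u t) (p t) - DqT φ (q t) (u t) (lam t)) := by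
        abel
      rw [hrw, h, neg_zero]
    · have h := G4 t htI
      have hrw : DuT f (q t) (u t) (p t) + DuT φ (q t) (u t) (lam t)
          = -(-(DuT f (q t) (u t) (p t)) - DuT φ (q t) (u t) (lam t)) := by
        abel
      rw [hrw, h, neg_zero]
  · intro H δq δu δp δlam hδq hδu hδp hδlam h0 h1
    rw [key_deriv f φ hf hφ t₀ t₁ q u p lam hq hu hp hlam δq δu δp δlam
      hδq hδu hδp hδlam h0 h1]
    refine Eq.trans (intervalIntegral.integral_congr (g := fun _ => (0:ℝ)) ?_)
      intervalIntegral.integral_zero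
    intro t htI
    rw [Set.uIcc_of_le ht.le] at htI
    obtain ⟨e1, e2, e3, e4⟩ := H t htI
    have z1 : deriv q t - f (q t, u t) = 0 := sub_eq_zero.2 e1
    have z2 : -deriv p t - DqT f (q t) (u t) (p t) - DqT φ (q t) (u t) (lam t) = 0 := by
      rw [e2]; abel
    have z4 : -(DuT f (q t) (u t) (p t)) - DuT φ (q t) (u t) (lam t) = 0 := by
      have hrw : -(DuT f (q t) (u t) (p t)) - DuT φ (q t) (u t) (lam t)
          = -(DuT f (q t) (u t) (p t) + DuT φ (q t) (u t) (lam t)) := by abel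
      rw [hrw, e4, neg_zero]
    simp only [z1, z2, z4, e3]
    simp

end
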